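/- arXiv:0709.1433 — 2 statements merged into one kernel-verified Lean document; each statement's English description precedes it below -/
import Mathlib

section
/- Let F be a field, σ a sesqui-morphism, λ ∈ F* σ-compatible, G a σ-symmetric F*-graph on V, and x ∈ V. Suppose (X₁, X₂) and (Y₁, Y₂) are partitions of V \ {x}. Then cutrk_{G−x}(X₁) + cutrk_{(G∗(x,λ))−x}(Y₁) ≥ cutrk_G(X₁ ∩ Y₁) + cutrk_G(X₂ ∩ Y₂) − 1. -/
noncomputable def rkSub {V W F : Type*} [Fintype V] [Fintype W] [Field F]
    (M : Matrix V W F) (X : Finset V) (Y : Finset W) : ℕ :=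
  (M.submatrix (fun i : X => (i : V)) (fun j : Y => (j : W))).rank

open Module Submodule Set Finset Matrix

section Toolkit

variable {F V : Type*} [Field F] [Fintype V] [DecidableEq V]

/-- restriction of a vector to the coordinates in `R` -/
noncomputable def prj (F : Type*) [Field F] {V : Type*} (R : Finset V) :
    (V → F) →ₗ[F] (R → F) :=
  LinearMap.funLeft F F (fun i : R => (i : V))

lemma prj_eq_zero_iff {R : Finset V} {u : V → F} :
    prj F R u = 0 ↔ ∀ i ∈ R, u i = 0 := by
  constructor
  · intro h i hi
    exact congrFun h ⟨i, hi⟩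
  · intro h
    funext j
    exact h j j.2

lemma mem_ker_prj {R : Finset V} {u : V → F} :
    u ∈ LinearMap.ker (prj F R) ↔ ∀ i ∈ R, u i = 0 := by
  rw [LinearMap.mem_ker, prj_eq_zero_iff]

/-- dimension of the projection of `U` onto coordinates `R` -/
noncomputable def fdim (U : Submodule F (V → F)) (R : Finset V) : ℕ :=
  finrank F (U.map (prj F R))

lemma finrank_map_add_inf_ker {G : Type*} [AddCommGroup G] [Module F G]
    (φ : (V → F) →ₗ[F] G) (U : Submodule F (V → F)) :
    finrank F (U.map φ) + finrank F ↥(U ⊓ LinearMap.ker φ) = finrank F U := by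
  have h1 := LinearMap.finrank_range_add_finrank_ker (φ.domRestrict U)
  rw [LinearMap.range_domRestrict, LinearMap.ker_domRestrict] at h1
  rw [← h1]
  congr 1
  have e2 : (LinearMap.ker φ).comap U.subtype
      = (U ⊓ LinearMap.ker φ).comap U.subtype := by
    rw [Submodule.comap_inf, Submodule.comap_subtype_self, top_inf_eq]
  rw [e2]
  exact ((Submodule.comapSubtypeEquivOfLe (inf_le_left (b := LinearMap.ker φ))).finrank_eq).symm

lemma fdim_add_inf_ker (U : Submodule F (V → F)) (R : Finset V) :
    fdim U R + finrank F ↥(U ⊓ LinearMap.ker (prj F R)) = finrank F U :=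
  finrank_map_add_inf_ker _ _

lemma fdim_mono {U U' : Submodule F (V → F)} (h : U ≤ U') (R : Finset V) :
    fdim U R ≤ fdim U' R :=
  Submodule.finrank_mono (Submodule.map_mono h)

lemma fdim_sup_span_le (U : Submodule F (V → F)) (v : V → F) (R : Finset V) :
    fdim (U ⊔ Submodule.span F {v}) R ≤ fdim U R + 1 := by
  unfold fdim
  rw [Submodule.map_sup]
  have h2 : finrank F ↥((Submodule.span F {v}).map (prj F R)) ≤ 1 := by
    rw [Submodule.map_span, Set.image_singleton]
    by_cases hv : (prj F R) v = 0
    · rw [hv, Submodule.span_zero_singleton]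
      simp
    · rw [finrank_span_singleton hv]
  have h3 := Submodule.finrank_sup_add_finrank_inf_eq (U.map (prj F R))
    ((Submodule.span F {v}).map (prj F R))
  omega

lemma fdim_span_sup_le (U : Submodule F (V → F)) (v : V → F) (R : Finset V) :
    fdim (Submodule.span F {v} ⊔ U) R ≤ fdim U R + 1 := by
  rw [sup_comm]
  exact fdim_sup_span_le U v R

lemma ker_prj_insert (x : V) (R : Finset V) :
    LinearMap.ker (prj F (insert x R))
      = LinearMap.ker (prj F R) ⊓ LinearMap.ker (LinearMap.proj x : (V → F) →ₗ[F] F) := by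
  ext u
  simp only [Submodule.mem_inf, LinearMap.mem_ker, prj_eq_zero_iff, LinearMap.proj_apply,
    Finset.forall_mem_insert]
  tauto

lemma fdim_insert_le (U : Submodule F (V → F)) (x : V) (R : Finset V) :
    fdim U (insert x R) ≤ fdim U R + 1 := by
  have h1 := fdim_add_inf_ker U R
  have h2 := fdim_add_inf_ker U (insert x R)
  have h3 := finrank_map_add_inf_ker (LinearMap.proj x : (V → F) →ₗ[F] F)
    (U ⊓ LinearMap.ker (prj F R))
  have h4 : finrank F ↥((U ⊓ LinearMap.ker (prj F R)).map
      (LinearMap.proj x : (V → F) →ₗ[F] F)) ≤ 1 := by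
    have h5 := Submodule.finrank_le ((U ⊓ LinearMap.ker (prj F R)).map
      (LinearMap.proj x : (V → F) →ₗ[F] F))
    simpa using h5
  have h6 : U ⊓ LinearMap.ker (prj F R) ⊓ LinearMap.ker (LinearMap.proj x : (V → F) →ₗ[F] F)
      = U ⊓ LinearMap.ker (prj F (insert x R)) := by
    rw [ker_prj_insert, inf_assoc]
  rw [h6] at h3
  omega

lemma fdim_insert_eq_of_forall {U : Submodule F (V → F)} {x : V} {R : Finset V}
    (h : ∀ u ∈ U, (∀ i ∈ R, u i = 0) → u x = 0) :
    fdim U (insert x R) = fdim U R := by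
  have hker : U ⊓ LinearMap.ker (prj F (insert x R)) = U ⊓ LinearMap.ker (prj F R) := by
    apply le_antisymm
    · refine inf_le_inf_left _ ?_
      intro u hu
      rw [mem_ker_prj] at hu ⊢
      intro i hi
      exact hu i (Finset.mem_insert_of_mem hi)
    · intro u hu
      obtain ⟨huU, huk⟩ := Submodule.mem_inf.mp hu
      rw [mem_ker_prj] at huk
      refine Submodule.mem_inf.mpr ⟨huU, ?_⟩
      rw [mem_ker_prj]
      intro i hi
      rcases Finset.mem_insert.mp hi with rfl | hi2
      · exact h u huU huk
      · exact huk i hi2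
  have h1 := fdim_add_inf_ker U R
  have h2 := fdim_add_inf_ker U (insert x R)
  rw [hker] at h2
  omega

/-- the span of the columns of `M` indexed by `C`, inside `V → F` -/
noncomputable def colSpan (M : Matrix V V F) (C : Finset V) : Submodule F (V → F) :=
  Submodule.span F ((fun t => fun i => M i t) '' (C : Set V))

lemma colSpan_mono (M : Matrix V V F) {C C' : Finset V} (h : C ⊆ C') :
    colSpan M C ≤ colSpan M C' :=
  Submodule.span_mono (Set.image_mono (by exact_mod_cast h))

lemma colSpan_union (M : Matrix V V F) (C₁ C₂ : Finset V) :
    colSpan M (C₁ ∪ C₂) = colSpan M C₁ ⊔ colSpan M C₂ := by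
  unfold colSpan
  rw [Finset.coe_union, Set.image_union, Submodule.span_union]

lemma colSpan_inter_le (M : Matrix V V F) (C₁ C₂ : Finset V) :
    colSpan M (C₁ ∩ C₂) ≤ colSpan M C₁ ⊓ colSpan M C₂ :=
  le_inf (colSpan_mono M Finset.inter_subset_left) (colSpan_mono M Finset.inter_subset_right)

lemma colSpan_insert (M : Matrix V V F) (x : V) (C : Finset V) :
    colSpan M (insert x C)
      = Submodule.span F {fun i => M i x} ⊔ colSpan M C := by
  unfold colSpan
  rw [Finset.coe_insert, Set.image_insert_eq, Submodule.span_insert]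

lemma rkSub_eq_fdim (M : Matrix V V F) (R C : Finset V) :
    rkSub M R C = fdim (colSpan M C) R := by
  have hspan : Submodule.span F
        (Set.range ((M.submatrix (fun i : R => (i : V)) (fun j : C => (j : V)))ᵀ))
      = (Submodule.span F ((fun t => fun i => M i t) '' (C : Set V))).map (prj F R) := by
    rw [Submodule.map_span]
    congr 1
    have h1 : ((M.submatrix (fun i : R => (i : V)) (fun j : C => (j : V)))ᵀ)
        = fun j : C => (prj F R) ((fun t => fun i => M i t) (j : V)) := rfl
    rw [h1, ← Set.image_comp]
    have h2 : Set.range (fun j : C => (prj F R) ((fun t => fun i => M i t) (j : V)))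
        = ((prj F R) ∘ (fun t => fun i => M i t)) '' (Set.range (fun j : C => (j : V))) := by
      rw [← Set.range_comp]
      rfl
    rw [h2]
    simp
  unfold rkSub fdim colSpan
  rw [Matrix.rank_eq_finrank_span_cols]
  exact congrArg (fun S : Submodule F (R → F) => finrank F S) hspan

lemma fdim_submodular (U₁ U₂ : Submodule F (V → F)) (R₁ R₂ : Finset V) :
    fdim (U₁ ⊔ U₂) (R₁ ∩ R₂) + fdim (U₁ ⊓ U₂) (R₁ ∪ R₂) ≤ fdim U₁ R₁ + fdim U₂ R₂ := by
  have hKi : LinearMap.ker (prj F (R₁ ∪ R₂))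
      = LinearMap.ker (prj F R₁) ⊓ LinearMap.ker (prj F R₂) := by
    ext u
    simp only [Submodule.mem_inf, LinearMap.mem_ker, prj_eq_zero_iff, Finset.mem_union]
    constructor
    · intro h
      exact ⟨fun i hi => h i (Or.inl hi), fun i hi => h i (Or.inr hi)⟩
    · rintro ⟨h1, h2⟩ i (hi | hi)
      · exact h1 i hi
      · exact h2 i hi
  have hKs : LinearMap.ker (prj F (R₁ ∩ R₂))
      = LinearMap.ker (prj F R₁) ⊔ LinearMap.ker (prj F R₂) := by
    apply le_antisymm
    · intro u hu
      rw [mem_ker_prj] at hu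
      refine Submodule.mem_sup.mpr
        ⟨fun i => if i ∈ R₁ then 0 else u i, ?_, fun i => if i ∈ R₁ then u i else 0, ?_, ?_⟩
      · rw [mem_ker_prj]
        intro i hi
        simp [hi]
      · rw [mem_ker_prj]
        intro i hi
        by_cases h1 : i ∈ R₁
        · simp [h1, hu i (Finset.mem_inter.mpr ⟨h1, hi⟩)]
        · simp [h1]
      · funext i
        by_cases h1 : i ∈ R₁ <;> simp [h1]
    · apply sup_le
      · intro u hu
        rw [mem_ker_prj] at hu
        rw [mem_ker_prj]
        intro i hi
        exact hu i (Finset.mem_inter.mp hi).1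
      · intro u hu
        rw [mem_ker_prj] at hu
        rw [mem_ker_prj]
        intro i hi
        exact hu i (Finset.mem_inter.mp hi).2
  have e1 := fdim_add_inf_ker U₁ R₁
  have e2 := fdim_add_inf_ker U₂ R₂
  have e3 := fdim_add_inf_ker (U₁ ⊔ U₂) (R₁ ∩ R₂)
  have e4 := fdim_add_inf_ker (U₁ ⊓ U₂) (R₁ ∪ R₂)
  rw [hKs] at e3
  rw [hKi] at e4
  have e5 := Submodule.finrank_sup_add_finrank_inf_eq U₁ U₂
  have e6 := Submodule.finrank_sup_add_finrank_inf_eq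
    (U₁ ⊓ LinearMap.ker (prj F R₁)) (U₂ ⊓ LinearMap.ker (prj F R₂))
  have i7 : finrank F ↥((U₁ ⊓ LinearMap.ker (prj F R₁)) ⊔ (U₂ ⊓ LinearMap.ker (prj F R₂)))
      ≤ finrank F ↥((U₁ ⊔ U₂) ⊓ (LinearMap.ker (prj F R₁) ⊔ LinearMap.ker (prj F R₂))) :=
    Submodule.finrank_mono
      (sup_le (inf_le_inf le_sup_left le_sup_left) (inf_le_inf le_sup_right le_sup_right))
  have e8 : (U₁ ⊓ LinearMap.ker (prj F R₁)) ⊓ (U₂ ⊓ LinearMap.ker (prj F R₂))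
      = (U₁ ⊓ U₂) ⊓ (LinearMap.ker (prj F R₁) ⊓ LinearMap.ker (prj F R₂)) := by
    ext u
    simp only [Submodule.mem_inf]
    tauto
  rw [e8] at e6
  omega

lemma rkSub_submodular (M : Matrix V V F) (R₁ C₁ R₂ C₂ : Finset V) :
    rkSub M (R₁ ∩ R₂) (C₁ ∪ C₂) + rkSub M (R₁ ∪ R₂) (C₁ ∩ C₂)
      ≤ rkSub M R₁ C₁ + rkSub M R₂ C₂ := by
  rw [rkSub_eq_fdim, rkSub_eq_fdim, rkSub_eq_fdim, rkSub_eq_fdim, colSpan_union]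
  have h1 : fdim (colSpan M (C₁ ∩ C₂)) (R₁ ∪ R₂)
      ≤ fdim (colSpan M C₁ ⊓ colSpan M C₂) (R₁ ∪ R₂) :=
    fdim_mono (colSpan_inter_le M C₁ C₂) _
  have h2 := fdim_submodular (colSpan M C₁) (colSpan M C₂) R₁ R₂
  omega

end Toolkit

section MapRank

variable {F : Type*} [Field F]

lemma mulVec_map_ringEquiv {m n : Type*} [Fintype n] (e : F ≃+* F) (A : Matrix m n F)
    (w : n → F) :
    (A.map ⇑e).mulVec (fun j => e (w j)) = fun i => e (A.mulVec w i) := by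
  funext i
  simp only [Matrix.mulVec, dotProduct, Matrix.map_apply, map_sum, _root_.map_mul]

lemma rank_map_ringEquiv {m n : Type*} [Fintype n] (e : F ≃+* F) (A : Matrix m n F) :
    (A.map ⇑e).rank = A.rank := by
  have hmem : ∀ u : m → F, u ∈ LinearMap.range A.mulVecLin →
      (fun i => e (u i)) ∈ LinearMap.range (A.map ⇑e).mulVecLin := by
    rintro _ ⟨w, rfl⟩
    exact ⟨fun j => e (w j), by rw [Matrix.mulVecLin_apply, mulVec_map_ringEquiv]; rfl⟩
  have hmem' : ∀ u : m → F, u ∈ LinearMap.range (A.map ⇑e).mulVecLin →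
      (fun i => e.symm (u i)) ∈ LinearMap.range A.mulVecLin := by
    rintro _ ⟨w, rfl⟩
    refine ⟨fun j => e.symm (w j), ?_⟩
    rw [Matrix.mulVecLin_apply, Matrix.mulVecLin_apply]
    funext i
    apply e.injective
    have h2 := congrFun (mulVec_map_ringEquiv e A (fun j => e.symm (w j))) i
    simp only [RingEquiv.apply_symm_apply] at h2
    rw [RingEquiv.apply_symm_apply]
    rw [← h2]
  let j : ↥(LinearMap.range A.mulVecLin) ≃+ ↥(LinearMap.range (A.map ⇑e).mulVecLin) :=
  { toFun := fun u => ⟨fun i => e (u.1 i), hmem _ u.2⟩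
    invFun := fun u => ⟨fun i => e.symm (u.1 i), hmem' _ u.2⟩
    left_inv := by
      intro u
      ext1
      funext i
      simp
    right_inv := by
      intro u
      ext1
      funext i
      simp
    map_add' := by
      intro u v
      ext1
      funext i
      simp }
  have hr : Module.rank F ↥(LinearMap.range A.mulVecLin)
      = Module.rank F ↥(LinearMap.range (A.map ⇑e).mulVecLin) := by
    refine rank_eq_of_equiv_equiv (ZeroHom.mk ⇑e (map_zero e)) j e.bijective ?_
    intro r u
    ext1
    show (fun i => e ((r • (u : m → F)) i)) = e r • (fun i => e ((u : m → F) i))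
    funext i
    simp [_root_.map_mul]
  unfold Matrix.rank Module.finrank
  rw [hr]

end MapRank

section Symm

variable {F V : Type*} [Field F] [Fintype V] [DecidableEq V]

lemma rkSub_symm (σ : F → F) (e : F ≃+* F) (hσ1 : σ 1 ≠ 0)
    (heσ : ∀ a : F, σ a = σ 1 * e a)
    (M : Matrix V V F) (hs : ∀ z t : V, M z t = σ (M t z)) (R C : Finset V) :
    rkSub M R C = rkSub M C R := by
  have hD : M.submatrix (fun j : C => (j : V)) (fun i : R => (i : V))
      = σ 1 • (((M.submatrix (fun i : R => (i : V)) (fun j : C => (j : V))).map ⇑e)ᵀ) := by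
    ext j i
    simp only [Matrix.submatrix_apply, Matrix.smul_apply, Matrix.transpose_apply,
      Matrix.map_apply, smul_eq_mul]
    rw [hs (j : V) (i : V), heσ]
  unfold rkSub
  rw [hD]
  have hsm : σ 1 • (((M.submatrix (fun i : R => (i : V)) (fun j : C => (j : V))).map ⇑e)ᵀ)
      = (σ 1 • (1 : Matrix C C F))
        * (((M.submatrix (fun i : R => (i : V)) (fun j : C => (j : V))).map ⇑e)ᵀ) := by
    rw [Matrix.smul_mul, Matrix.one_mul]
  rw [hsm, Matrix.rank_mul_eq_right_of_isUnit_det, Matrix.rank_transpose,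
    rank_map_ringEquiv]
  rw [Matrix.det_smul, Matrix.det_one, mul_one]
  exact (isUnit_iff_ne_zero).mpr (pow_ne_zero _ hσ1)

end Symm

section Phi

variable {F V : Type*} [Field F] [Fintype V] [DecidableEq V]

/-- subtract `l * u x` times the column `c` -/
noncomputable def tmapSub (c : V → F) (l : F) (x : V) : (V → F) →ₗ[F] (V → F) where
  toFun u := u - (l * u x) • c
  map_add' u v := by
    funext i
    simp only [Pi.add_apply, Pi.sub_apply, Pi.smul_apply, smul_eq_mul]
    ring
  map_smul' a u := by
    funext i
    simp only [Pi.smul_apply, Pi.sub_apply, smul_eq_mul, RingHom.id_apply]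
    ring

noncomputable def tmapAdd (c : V → F) (l : F) (x : V) : (V → F) →ₗ[F] (V → F) where
  toFun u := u + (l * u x) • c
  map_add' u v := by
    funext i
    simp only [Pi.add_apply, Pi.smul_apply, smul_eq_mul]
    ring
  map_smul' a u := by
    funext i
    simp only [Pi.smul_apply, Pi.add_apply, smul_eq_mul, RingHom.id_apply]
    ring

noncomputable def phiE (M : Matrix V V F) (l : F) (x : V) (hd : M x x = 0) :
    (V → F) ≃ₗ[F] (V → F) :=
  LinearEquiv.ofLinear (tmapSub (fun i => M i x) l x) (tmapAdd (fun i => M i x) l x)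
    (by
      apply LinearMap.ext
      intro u
      funext i
      simp only [LinearMap.comp_apply, tmapSub, tmapAdd, LinearMap.coe_mk, AddHom.coe_mk,
        Pi.add_apply, Pi.sub_apply, Pi.smul_apply, smul_eq_mul, LinearMap.id_apply, hd]
      ring)
    (by
      apply LinearMap.ext
      intro u
      funext i
      simp only [LinearMap.comp_apply, tmapSub, tmapAdd, LinearMap.coe_mk, AddHom.coe_mk,
        Pi.add_apply, Pi.sub_apply, Pi.smul_apply, smul_eq_mul, LinearMap.id_apply, hd]
      ring)

lemma phiE_apply (M : Matrix V V F) (l : F) (x : V) (hd : M x x = 0) (u : V → F) :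
    phiE M l x hd u = u - (l * u x) • (fun i => M i x) := rfl

lemma phiE_fixes (M : Matrix V V F) (l : F) (x : V) (hd : M x x = 0) {u : V → F}
    (hux : u x = 0) : phiE M l x hd u = u := by
  rw [phiE_apply, hux, mul_zero, zero_smul, sub_zero]

lemma phiE_apply_x (M : Matrix V V F) (l : F) (x : V) (hd : M x x = 0) (u : V → F) :
    phiE M l x hd u x = u x := by
  rw [phiE_apply]
  simp [hd]

variable (M M' : Matrix V V F) (l : F) (x : V)
  (hd : M x x = 0)
  (hM' : ∀ z t : V, M' z t = if z ≠ x ∧ t ≠ x then M z t + l * M z x * M x t else M z t)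

include hM' in
lemma phiE_col (ht : (t : V) ≠ x) :
    phiE M l x hd (fun i => M' i t) = fun i => M i t := by
  have hMxt : M' x t = M x t := by
    rw [hM' x t]
    simp
  funext i
  rw [phiE_apply]
  simp only [Pi.sub_apply, Pi.smul_apply, smul_eq_mul]
  by_cases hi : i = x
  · subst hi
    rw [hMxt, hd]
    ring
  · rw [hM' i t, hMxt]
    simp only [hi, ht, ne_eq, not_false_iff, and_self, if_true]
    ring

include hM' in
lemma phiE_map_colSpan {C : Finset V} (hx : x ∉ C) :
    (colSpan M' C).map ((phiE M l x hd).toLinearMap) = colSpan M C := by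
  unfold colSpan
  rw [Submodule.map_span, ← Set.image_comp]
  congr 1
  apply Set.image_congr
  intro t ht
  have htx : t ≠ x := by
    rintro rfl
    exact hx (by exact_mod_cast ht)
  exact phiE_col M M' l x hd hM' htx

lemma fdim_map_phiE (U : Submodule F (V → F)) {R : Finset V} (hx : x ∈ R) :
    fdim (U.map ((phiE M l x hd).toLinearMap)) R = fdim U R := by
  have h3 : finrank F ↥(U.map ((phiE M l x hd).toLinearMap)) = finrank F ↥U :=
    LinearEquiv.finrank_map_eq _ U
  have h4 : U.map ((phiE M l x hd).toLinearMap) ⊓ LinearMap.ker (prj F R)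
      = U ⊓ LinearMap.ker (prj F R) := by
    ext u
    simp only [Submodule.mem_inf]
    constructor
    · rintro ⟨hu, hk⟩
      obtain ⟨w, hw, rfl⟩ := hu
      have hwx : w x = 0 := by
        have h5 := mem_ker_prj.mp hk x hx
        rwa [LinearEquiv.coe_toLinearMap, phiE_apply_x] at h5
      rw [LinearEquiv.coe_toLinearMap, phiE_fixes M l x hd hwx]
      rw [LinearEquiv.coe_toLinearMap, phiE_fixes M l x hd hwx] at hk
      exact ⟨hw, hk⟩
    · rintro ⟨hu, hk⟩
      have hux : u x = 0 := mem_ker_prj.mp hk x hx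
      exact ⟨⟨u, hu, by rw [LinearEquiv.coe_toLinearMap, phiE_fixes M l x hd hux]⟩, hk⟩
  have h1 := fdim_add_inf_ker U R
  have h2 := fdim_add_inf_ker (U.map ((phiE M l x hd).toLinearMap)) R
  rw [h4] at h2
  omega

include hd hM' in
lemma rkSub_phi {R C : Finset V} (hxR : x ∈ R) (hxC : x ∉ C) :
    rkSub M' R C = rkSub M R C := by
  rw [rkSub_eq_fdim, rkSub_eq_fdim, ← phiE_map_colSpan M M' l x hd hM' hxC,
    fdim_map_phiE M l x hd _ hxR]

include hd hM' in
lemma exists_agree (hl : l ≠ 0) {C R' : Finset V} (hx : x ∉ C) {u : V → F}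
    (hu : u ∈ colSpan M' C) (h0 : ∀ i ∈ R', u i = 0) (hux : u x ≠ 0) :
    ∃ w ∈ colSpan M C, ∀ i ∈ R', w i = M i x := by
  have hw : phiE M l x hd u ∈ colSpan M C := by
    rw [← phiE_map_colSpan M M' l x hd hM' hx]
    exact Submodule.mem_map_of_mem hu
  refine ⟨(-(l * u x))⁻¹ • (phiE M l x hd u), Submodule.smul_mem _ _ hw, ?_⟩
  intro i hi
  have hlu : -(l * u x) ≠ 0 := by
    simp only [ne_eq, neg_eq_zero, mul_eq_zero, not_or]
    exact ⟨hl, hux⟩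
  rw [phiE_apply]
  simp only [Pi.smul_apply, Pi.sub_apply, smul_eq_mul]
  rw [h0 i hi]
  field_simp
  ring

include hd hM' in
lemma colSpan_le_sup {C : Finset V} (hx : x ∉ C) :
    colSpan M C ≤ colSpan M' C ⊔ Submodule.span F {fun i => M i x} := by
  unfold colSpan
  rw [Submodule.span_le]
  rintro _ ⟨t, ht, rfl⟩
  have htx : t ≠ x := by
    rintro rfl
    exact hx (by exact_mod_cast ht)
  have hrel : (fun i => M i t)
      = (fun i => M' i t) - (l * M x t) • (fun i => M i x) := by
    have h1 := phiE_col M M' l x hd hM' htx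
    rw [phiE_apply] at h1
    have hMxt : M' x t = M x t := by
      rw [hM' x t]
      simp
    rw [← h1, hMxt]
  show (fun i => M i t) ∈ colSpan M' C ⊔ Submodule.span F {fun i => M i x}
  rw [hrel]
  refine sub_mem (Submodule.mem_sup_left ?_) (Submodule.mem_sup_right ?_)
  · exact Submodule.subset_span (Set.mem_image_of_mem _ ht)
  · exact Submodule.smul_mem _ _ (Submodule.mem_span_singleton_self _)

lemma rkSub_insert_col_eq {C S : Finset V}
    (h : ∃ w ∈ colSpan M C, ∀ i ∈ S, w i = M i x) :
    rkSub M S (insert x C) = rkSub M S C := by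
  rw [rkSub_eq_fdim, rkSub_eq_fdim, colSpan_insert]
  unfold fdim
  rw [Submodule.map_sup]
  obtain ⟨w, hw, hagree⟩ := h
  have hle : Submodule.map (prj F S) (Submodule.span F {fun i => M i x})
      ≤ Submodule.map (prj F S) (colSpan M C) := by
    rw [Submodule.map_span, Set.image_singleton, Submodule.span_le,
      Set.singleton_subset_iff]
    have heq : (prj F S) (fun i => M i x) = (prj F S) w := by
      funext j
      exact (hagree j j.2).symm
    rw [heq]
    exact Submodule.mem_map_of_mem hw
  rw [sup_eq_right.mpr hle]

end Phi

/-- For partitions `(X₁,X₂)` and `(Y₁,Y₂)` of `V \ {x}`: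
`cutrk_{G−x}(X₁) + cutrk_{(G∗(x,λ))−x}(Y₁) ≥ cutrk_G(X₁ ∩ Y₁) + cutrk_G(X₂ ∩ Y₂) − 1`. -/
theorem localComp_delete_cutrank_ineq {F V : Type*} [Field F] [Fintype V] [DecidableEq V]
    (σ : F → F)
    (hinv : ∀ a : F, σ (σ a) = a)
    (hauto : ∃ e : F ≃+* F, ∀ x : F, e x = σ x / σ 1)
    (l : F) (hl : l ≠ 0) (hcompat : σ l = l * σ 1 ^ 2)
    (M : Matrix V V F) (hsym : ∀ z t : V, M z t = σ (M t z))
    (hdiag : ∀ z : V, M z z = 0)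
    (x : V)
    (M' : Matrix V V F)
    (hM' : ∀ z t : V,
      M' z t = if z ≠ x ∧ t ≠ x then M z t + l * M z x * M x t else M z t)
    (X₁ X₂ Y₁ Y₂ : Finset V)
    (hXpart : X₁ ∪ X₂ = ({x} : Finset V)ᶜ) (hXdisj : Disjoint X₁ X₂)
    (hYpart : Y₁ ∪ Y₂ = ({x} : Finset V)ᶜ) (hYdisj : Disjoint Y₁ Y₂) :
    rkSub M X₁ X₂ + rkSub M' Y₁ Y₂ + 1
      ≥ rkSub M (X₁ ∩ Y₁) (X₁ ∩ Y₁)ᶜ + rkSub M (X₂ ∩ Y₂) (X₂ ∩ Y₂)ᶜ := by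
  classical
  obtain ⟨e, he⟩ := hauto
  have hσ1 : σ 1 ≠ 0 := by
    intro h
    have h1 := he 1
    rw [h, div_zero] at h1
    rw [_root_.map_one] at h1
    exact one_ne_zero h1
  have heσ : ∀ a : F, σ a = σ 1 * e a := by
    intro a
    rw [he a, mul_comm, div_mul_cancel₀ _ hσ1]
  have hel : e l = l * σ 1 := by
    rw [he l, hcompat, pow_two, mul_div_assoc, mul_div_cancel_left₀ _ hσ1]
  have key : ∀ p q : V, e (M p q) = M q p / σ 1 := by
    intro p q
    rw [eq_div_iff hσ1, mul_comm, ← heσ, ← hsym q p]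
  have hsym' : ∀ z t : V, M' z t = σ (M' t z) := by
    intro z t
    by_cases hz : z = x
    · rw [hz, hM' x t, hM' t x]
      by_cases ht : t = x
      · rw [ht]
        simp only [ne_eq, not_true_eq_false, false_and, and_false, if_false]
        exact hsym x x
      · simp only [ne_eq, not_true_eq_false, false_and, and_false, if_false]
        exact hsym x t
    · by_cases ht : t = x
      · rw [ht, hM' z x, hM' x z]
        simp only [ne_eq, not_true_eq_false, false_and, and_false, if_false]
        exact hsym z x
      · rw [hM' z t, hM' t z]
        simp only [ne_eq, hz, ht, not_false_iff, and_self, if_true]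
        rw [heσ, map_add, _root_.map_mul, _root_.map_mul, hel, key t z, key t x, key x z]
        field_simp
  -- membership facts
  have hxX₁ : x ∉ X₁ := by
    intro h
    have h2 : x ∈ X₁ ∪ X₂ := Finset.mem_union_left _ h
    rw [hXpart] at h2
    simp at h2
  have hxX₂ : x ∉ X₂ := by
    intro h
    have h2 : x ∈ X₁ ∪ X₂ := Finset.mem_union_right _ h
    rw [hXpart] at h2
    simp at h2
  have hxY₁ : x ∉ Y₁ := by
    intro h
    have h2 : x ∈ Y₁ ∪ Y₂ := Finset.mem_union_left _ h
    rw [hYpart] at h2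
    simp at h2
  have hxY₂ : x ∉ Y₂ := by
    intro h
    have h2 : x ∈ Y₁ ∪ Y₂ := Finset.mem_union_right _ h
    rw [hYpart] at h2
    simp at h2
  have hcovX : ∀ z, z ≠ x → (z ∈ X₁ ∨ z ∈ X₂) := by
    intro z hz
    have h2 : z ∈ X₁ ∪ X₂ := by
      rw [hXpart]
      simp [hz]
    exact Finset.mem_union.mp h2
  have hcovY : ∀ z, z ≠ x → (z ∈ Y₁ ∨ z ∈ Y₂) := by
    intro z hz
    have h2 : z ∈ Y₁ ∪ Y₂ := by
      rw [hYpart]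
      simp [hz]
    exact Finset.mem_union.mp h2
  have hdX : ∀ z, z ∈ X₁ → z ∈ X₂ → False :=
    fun z h1 h2 => (Finset.disjoint_left.mp hXdisj h1) h2
  have hdY : ∀ z, z ∈ Y₁ → z ∈ Y₂ → False :=
    fun z h1 h2 => (Finset.disjoint_left.mp hYdisj h1) h2
  have hI1 : (X₁ ∩ Y₁)ᶜ = insert x (X₂ ∪ Y₂) := by
    ext z
    simp only [Finset.mem_compl, Finset.mem_inter, Finset.mem_insert, Finset.mem_union, not_and]
    by_cases hz : z = x
    · subst hz
      constructor
      · intro _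
        exact Or.inl rfl
      · intro _ h
        exact absurd h hxX₁
    · constructor
      · intro h
        rcases hcovX z hz with h1 | h1
        · rcases hcovY z hz with h2 | h2
          · exact absurd h2 (h h1)
          · exact Or.inr (Or.inr h2)
        · exact Or.inr (Or.inl h1)
      · rintro (rfl | h | h) hc
        · exact absurd hc hxX₁
        · exact fun hy => hdX z hc h
        · exact fun hy => hdY z hy h
  have hI2 : (X₂ ∩ Y₂)ᶜ = insert x (X₁ ∪ Y₁) := by
    ext z
    simp only [Finset.mem_compl, Finset.mem_inter, Finset.mem_insert, Finset.mem_union, not_and]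
    by_cases hz : z = x
    · subst hz
      constructor
      · intro _
        exact Or.inl rfl
      · intro _ h
        exact absurd h hxX₂
    · constructor
      · intro h
        rcases hcovX z hz with h1 | h1
        · exact Or.inr (Or.inl h1)
        · rcases hcovY z hz with h2 | h2
          · exact Or.inr (Or.inr h2)
          · exact absurd h2 (h h1)
      · rintro (rfl | h | h) hc
        · exact absurd hc hxX₂
        · exact fun hy => hdX z h hc
        · exact fun hy => hdY z h hy
  have hT : ∀ R C : Finset V, rkSub M R C = rkSub M C R :=
    fun R C => rkSub_symm σ e hσ1 heσ M hsym R C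
  have hT' : ∀ R C : Finset V, rkSub M' R C = rkSub M' C R :=
    fun R C => rkSub_symm σ e hσ1 heσ M' hsym' R C
  by_cases hα : ∃ u ∈ colSpan M' Y₂, (∀ i ∈ Y₁, u i = 0) ∧ u x ≠ 0
  · by_cases hβ : ∃ u ∈ colSpan M' Y₁, (∀ i ∈ Y₂, u i = 0) ∧ u x ≠ 0
    · -- Case C : both exist
      obtain ⟨u, huC, hu0, hux⟩ := hα
      obtain ⟨u', huC', hu'0, hu'x⟩ := hβ
      obtain ⟨w, hwC, hwag⟩ := exists_agree M M' l x (hdiag x) hM' hl hxY₂ huC hu0 hux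
      obtain ⟨w', hwC', hwag'⟩ := exists_agree M M' l x (hdiag x) hM' hl hxY₁ huC' hu'0 hu'x
      have hT1 : rkSub M (X₁ ∩ Y₁) (X₁ ∩ Y₁)ᶜ = rkSub M (X₁ ∩ Y₁) (X₂ ∪ Y₂) := by
        rw [hI1]
        exact rkSub_insert_col_eq M x ⟨w, colSpan_mono M Finset.subset_union_right hwC,
          fun i hi => hwag i (Finset.mem_inter.mp hi).2⟩
      have hT2 : rkSub M (X₂ ∩ Y₂) (X₂ ∩ Y₂)ᶜ = rkSub M (X₂ ∩ Y₂) (X₁ ∪ Y₁) := by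
        rw [hI2]
        exact rkSub_insert_col_eq M x ⟨w', colSpan_mono M Finset.subset_union_right hwC',
          fun i hi => hwag' i (Finset.mem_inter.mp hi).2⟩
      have hN : rkSub M Y₁ Y₂ ≤ rkSub M' Y₁ Y₂ + 1 := by
        rw [rkSub_eq_fdim, rkSub_eq_fdim]
        calc fdim (colSpan M Y₂) Y₁
            ≤ fdim (colSpan M' Y₂ ⊔ Submodule.span F {fun i => M i x}) Y₁ :=
              fdim_mono (colSpan_le_sup M M' l x (hdiag x) hM' hxY₂) _
          _ ≤ fdim (colSpan M' Y₂) Y₁ + 1 := fdim_sup_span_le _ _ _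
      have hsub := rkSub_submodular M X₁ X₂ Y₁ Y₂
      have hT2' : rkSub M (X₁ ∪ Y₁) (X₂ ∩ Y₂) = rkSub M (X₂ ∩ Y₂) (X₁ ∪ Y₁) := hT _ _
      rw [hT2'] at hsub
      omega
    · -- Case ¬β
      push_neg at hβ
      have hb3 : rkSub M Y₁ (insert x Y₂) = rkSub M' Y₁ Y₂ := by
        rw [hT Y₁ (insert x Y₂)]
        rw [← rkSub_phi M M' l x (hdiag x) hM' (Finset.mem_insert_self x Y₂) hxY₁]
        rw [rkSub_eq_fdim, fdim_insert_eq_of_forall (fun u hu h0 => hβ u hu h0)]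
        rw [← rkSub_eq_fdim]
        exact hT' Y₂ Y₁
      have ha2 : rkSub M (insert x X₁) X₂ ≤ rkSub M X₁ X₂ + 1 := by
        calc rkSub M (insert x X₁) X₂ = rkSub M X₂ (insert x X₁) := hT _ _
          _ ≤ rkSub M X₂ X₁ + 1 := by
              rw [rkSub_eq_fdim, rkSub_eq_fdim, colSpan_insert]
              exact fdim_span_sup_le _ _ _
          _ = rkSub M X₁ X₂ + 1 := by rw [hT X₂ X₁]
      have hsub := rkSub_submodular M (insert x X₁) X₂ Y₁ (insert x Y₂)
      have hs1 : insert x X₁ ∩ Y₁ = X₁ ∩ Y₁ := by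
        ext z
        simp only [Finset.mem_inter, Finset.mem_insert]
        constructor
        · rintro ⟨rfl | h1, h2⟩
          · exact absurd h2 hxY₁
          · exact ⟨h1, h2⟩
        · rintro ⟨h1, h2⟩
          exact ⟨Or.inr h1, h2⟩
      have hs2 : X₂ ∪ insert x Y₂ = insert x (X₂ ∪ Y₂) := Finset.union_insert ..
      have hs3 : insert x X₁ ∪ Y₁ = insert x (X₁ ∪ Y₁) := Finset.insert_union ..
      have hs4 : X₂ ∩ insert x Y₂ = X₂ ∩ Y₂ := by
        ext z
        simp only [Finset.mem_inter, Finset.mem_insert]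
        constructor
        · rintro ⟨h1, rfl | h2⟩
          · exact absurd h1 hxX₂
          · exact ⟨h1, h2⟩
        · rintro ⟨h1, h2⟩
          exact ⟨h1, Or.inr h2⟩
      rw [hs1, hs2, hs3, hs4, ← hI1, ← hI2] at hsub
      have ht2 : rkSub M (X₂ ∩ Y₂) (X₂ ∩ Y₂)ᶜ = rkSub M (X₂ ∩ Y₂)ᶜ (X₂ ∩ Y₂) := hT _ _
      omega
  · -- Case ¬α
    push_neg at hα
    have hb2 : rkSub M (insert x Y₁) Y₂ = rkSub M' Y₁ Y₂ := by
      rw [← rkSub_phi M M' l x (hdiag x) hM' (Finset.mem_insert_self x Y₁) hxY₂]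
      rw [rkSub_eq_fdim, fdim_insert_eq_of_forall (fun u hu h0 => hα u hu h0)]
      rw [← rkSub_eq_fdim]
    have ha1 : rkSub M X₁ (insert x X₂) ≤ rkSub M X₁ X₂ + 1 := by
      rw [rkSub_eq_fdim, rkSub_eq_fdim, colSpan_insert]
      exact fdim_span_sup_le _ _ _
    have hsub := rkSub_submodular M X₁ (insert x X₂) (insert x Y₁) Y₂
    have hs1 : X₁ ∩ insert x Y₁ = X₁ ∩ Y₁ := by
      ext z
      simp only [Finset.mem_inter, Finset.mem_insert]
      constructor
      · rintro ⟨h1, rfl | h2⟩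
        · exact absurd h1 hxX₁
        · exact ⟨h1, h2⟩
      · rintro ⟨h1, h2⟩
        exact ⟨h1, Or.inr h2⟩
    have hs2 : insert x X₂ ∪ Y₂ = insert x (X₂ ∪ Y₂) := Finset.insert_union ..
    have hs3 : X₁ ∪ insert x Y₁ = insert x (X₁ ∪ Y₁) := Finset.union_insert ..
    have hs4 : insert x X₂ ∩ Y₂ = X₂ ∩ Y₂ := by
      ext z
      simp only [Finset.mem_inter, Finset.mem_insert]
      constructor
      · rintro ⟨rfl | h1, h2⟩
        · exact absurd h2 hxY₂
        · exact ⟨h1, h2⟩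
      · rintro ⟨h1, h2⟩
        exact ⟨Or.inr h1, h2⟩
    rw [hs1, hs2, hs3, hs4, ← hI1, ← hI2] at hsub
    have ht2 : rkSub M (X₂ ∩ Y₂) (X₂ ∩ Y₂)ᶜ = rkSub M (X₂ ∩ Y₂)ᶜ (X₂ ∩ Y₂) := hT _ _
    omega
end

section
/- Let F be a field, G an F*-graph on V with adjacency matrix M over F. Define the matroid M_G on ground set V ⊔ V' (V' a disjoint copy of V) represented by the (V, V ∪ V')-matrix [I | M]. Then for every X ⊆ V, with P_X := {x, x' : x ∈ X}, the matroid connectivity λ(P_X) := r(X ∪ X') + r((V\X) ∪ (V\X)') − r(V ∪ V') + 1 equals rk(M[X, V\X]) + rk(M[V\X, X]) + 1. -/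
open Matrix Module

section Aux

variable {F : Type*} [Field F]

/-- The product of submodules is linearly equivalent to the product of the submodules. -/
def submoduleProdEquiv {R M N : Type*} [Semiring R] [AddCommMonoid M] [AddCommMonoid N]
    [Module R M] [Module R N] (S : Submodule R M) (T : Submodule R N) :
    (S.prod T) ≃ₗ[R] S × T where
  toFun p := (⟨p.1.1, p.2.1⟩, ⟨p.1.2, p.2.2⟩)
  map_add' _ _ := rfl
  map_smul' _ _ := rfl
  invFun p := ⟨(p.1.1, p.2.1), ⟨p.1.2, p.2.2⟩⟩
  left_inv _ := rfl
  right_inv _ := rfl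

theorem range_prodMap' {R M N M' N' : Type*} [Semiring R] [AddCommMonoid M] [AddCommMonoid N]
    [AddCommMonoid M'] [AddCommMonoid N'] [Module R M] [Module R N] [Module R M'] [Module R N']
    (f : M →ₗ[R] M') (g : N →ₗ[R] N') :
    LinearMap.range (f.prodMap g) = (LinearMap.range f).prod (LinearMap.range g) := by
  ext ⟨x, y⟩
  constructor
  · rintro ⟨⟨a, b⟩, h⟩
    exact ⟨⟨a, (Prod.ext_iff.mp h).1⟩, ⟨b, (Prod.ext_iff.mp h).2⟩⟩
  · rintro ⟨⟨a, ha⟩, ⟨b, hb⟩⟩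
    exact ⟨(a, b), Prod.ext ha hb⟩

theorem rank_fromBlocks_diag {m₁ m₂ n₁ n₂ : Type*} [Fintype m₁] [Fintype m₂] [Fintype n₁]
    [Fintype n₂] (A : Matrix m₁ n₁ F) (D : Matrix m₂ n₂ F) :
    (Matrix.fromBlocks A 0 0 D).rank = A.rank + D.rank := by
  have h : (Matrix.fromBlocks A 0 0 D).mulVecLin =
      ((LinearEquiv.sumArrowLequivProdArrow m₁ m₂ F F).symm.toLinearMap) ∘ₗ
        (A.mulVecLin.prodMap D.mulVecLin) ∘ₗ
        (LinearEquiv.sumArrowLequivProdArrow n₁ n₂ F F).toLinearMap := by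
    ext x i
    cases i <;>
      simp [Matrix.mulVecLin_apply, Matrix.fromBlocks_mulVec,
        LinearEquiv.sumArrowLequivProdArrow, Equiv.sumArrowEquivProdArrow]
  rw [Matrix.rank, h, LinearMap.range_comp, LinearMap.range_comp, LinearEquiv.range,
    Submodule.map_top, LinearEquiv.finrank_map_eq, range_prodMap']
  rw [Matrix.rank, Matrix.rank, ← Module.finrank_prod]
  exact LinearEquiv.finrank_eq (submoduleProdEquiv _ _)

theorem rank_fromBlocks_one {m₂ n₁ n₂ : Type*} [Fintype m₂] [Fintype n₁] [Fintype n₂]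
    [DecidableEq n₁] [DecidableEq n₂] (B : Matrix n₁ n₂ F) (D : Matrix m₂ n₂ F) :
    (Matrix.fromBlocks (1 : Matrix n₁ n₁ F) B 0 D).rank = Fintype.card n₁ + D.rank := by
  have hmul : Matrix.fromBlocks (1 : Matrix n₁ n₁ F) (0 : Matrix n₁ n₂ F) (0 : Matrix m₂ n₁ F) D *
      Matrix.fromBlocks (1 : Matrix n₁ n₁ F) B (0 : Matrix n₂ n₁ F) (1 : Matrix n₂ n₂ F) =
      Matrix.fromBlocks 1 B 0 D := by
    rw [Matrix.fromBlocks_multiply]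
    simp
  have hdet : IsUnit (Matrix.fromBlocks (1 : Matrix n₁ n₁ F) B 0
      (1 : Matrix n₂ n₂ F)).det := by
    rw [Matrix.det_fromBlocks_zero₂₁]
    simp
  rw [← hmul, Matrix.rank_mul_eq_left_of_isUnit_det _ _ hdet, rank_fromBlocks_diag,
    Matrix.rank_one]

/-- Rank is invariant under reindexing (rectangular version). -/
theorem rank_reindex' {m n m' n' : Type*} [Fintype m] [Fintype m'] [Fintype n] [Fintype n']
    (e₁ : m ≃ m') (e₂ : n ≃ n') (A : Matrix m n F) :
    (Matrix.reindex e₁ e₂ A).rank = A.rank := by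
  rw [Matrix.rank, Matrix.rank, Matrix.mulVecLin_reindex, LinearMap.range_comp,
    LinearMap.range_comp, LinearEquiv.range, Submodule.map_top, LinearEquiv.finrank_map_eq]

/-- Equivalence between `↥X ⊕ ↥Y` and the coercion of `X.disjSum Y`. -/
def disjSumEquiv {α β : Type*} (X : Finset α) (Y : Finset β) : (↥X ⊕ ↥Y) ≃ ↥(X.disjSum Y) where
  toFun s := Sum.rec (fun a => ⟨Sum.inl a, Finset.inl_mem_disjSum.2 a.2⟩)
    (fun a => ⟨Sum.inr a, Finset.inr_mem_disjSum.2 a.2⟩) s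
  invFun s := match s with
    | ⟨Sum.inl a, h⟩ => Sum.inl ⟨a, Finset.inl_mem_disjSum.1 h⟩
    | ⟨Sum.inr a, h⟩ => Sum.inr ⟨a, Finset.inr_mem_disjSum.1 h⟩
  left_inv s := by rcases s with a | a <;> rfl
  right_inv s := by rcases s with ⟨a | a, h⟩ <;> rfl

/-- Equivalence between `↥X ⊕ ↥Xᶜ` and the ambient type. -/
def finsetSumCompl {α : Type*} [Fintype α] [DecidableEq α] (X : Finset α) :
    (↥X ⊕ ↥(Xᶜ)) ≃ α :=
  (Equiv.sumCongr (Equiv.refl ↥X)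
    (Equiv.subtypeEquivRight (fun x => Finset.mem_compl))).trans (Equiv.sumCompl (· ∈ X))

end Aux

/-- Rank of the set `S` of columns of the matrix `[I | M]` representing the matroid `M_G`. -/
noncomputable def mtrRank {V F : Type*} [Fintype V] [DecidableEq V] [Field F]
    (M : Matrix V V F) (S : Finset (V ⊕ V)) : ℕ :=
  ((Matrix.fromCols (1 : Matrix V V F) M).submatrix id
      (fun j : S => (j : V ⊕ V))).rank

theorem mtrRank_disjSum {F V : Type*} [Field F] [Fintype V] [DecidableEq V]
    (M : Matrix V V F) (X : Finset V) :
    mtrRank M (X.disjSum X) = X.card + rkSub M Xᶜ X := by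
  set A := (Matrix.fromCols (1 : Matrix V V F) M).submatrix id
      (fun j : ↥(X.disjSum X) => (j : V ⊕ V)) with hA
  have h1 : A.rank = (Matrix.reindex (finsetSumCompl X).symm
      (disjSumEquiv X X).symm A).rank := (rank_reindex' _ _ _).symm
  have h2 : Matrix.reindex (finsetSumCompl X).symm (disjSumEquiv X X).symm A =
      Matrix.fromBlocks 1 (M.submatrix (fun i : ↥X => (i : V)) (fun j : ↥X => (j : V)))
        0 (M.submatrix (fun i : ↥(Xᶜ) => (i : V)) (fun j : ↥X => (j : V))) := by
    ext i j
    rcases i with a | a <;> rcases j with b | b <;>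
      simp only [Matrix.reindex_apply, Matrix.submatrix_apply, Equiv.symm_symm, hA,
        Matrix.fromBlocks_apply₁₁, Matrix.fromBlocks_apply₁₂, Matrix.fromBlocks_apply₂₁,
        Matrix.fromBlocks_apply₂₂, id_eq]
    · show Matrix.fromCols (1 : Matrix V V F) M ((finsetSumCompl X) (Sum.inl a))
          (((disjSumEquiv X X) (Sum.inl b) : ↥(X.disjSum X)) : V ⊕ V) = _
      show (1 : Matrix V V F) (a : V) (b : V) = (1 : Matrix ↥X ↥X F) a b
      simp only [Matrix.one_apply, Subtype.ext_iff]
    · show Matrix.fromCols (1 : Matrix V V F) M ((finsetSumCompl X) (Sum.inl a))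
          (((disjSumEquiv X X) (Sum.inr b) : ↥(X.disjSum X)) : V ⊕ V) = _
      rfl
    · show Matrix.fromCols (1 : Matrix V V F) M ((finsetSumCompl X) (Sum.inr a))
          (((disjSumEquiv X X) (Sum.inl b) : ↥(X.disjSum X)) : V ⊕ V) = _
      show (1 : Matrix V V F) (a : V) (b : V) = (0 : F)
      have hne : (a : V) ≠ (b : V) := by
        intro h
        have ha := a.2
        rw [Finset.mem_compl] at ha
        exact ha (h ▸ b.2)
      simp [Matrix.one_apply, hne]
    · show Matrix.fromCols (1 : Matrix V V F) M ((finsetSumCompl X) (Sum.inr a))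
          (((disjSumEquiv X X) (Sum.inr b) : ↥(X.disjSum X)) : V ⊕ V) = _
      rfl
  rw [mtrRank, ← hA, h1, h2, rank_fromBlocks_one, rkSub, Fintype.card_coe]

theorem mtrRank_univ {F V : Type*} [Field F] [Fintype V] [DecidableEq V]
    (M : Matrix V V F) :
    mtrRank M (Finset.univ : Finset (V ⊕ V)) = Fintype.card V := by
  have h := mtrRank_disjSum M (Finset.univ : Finset V)
  rw [Finset.univ_disjSum_univ] at h
  rw [h, Finset.compl_univ]
  have h0 : rkSub M (∅ : Finset V) Finset.univ = 0 := by
    have := Matrix.rank_le_card_height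
      (M.submatrix (fun i : (∅ : Finset V) => (i : V))
        (fun j : (Finset.univ : Finset V) => (j : V)))
    rw [Fintype.card_coe, Finset.card_empty] at this
    exact Nat.le_zero.mp this
  rw [h0, Finset.card_univ, add_zero]

/-- The connectivity function of the partitioned matroid `(M_G, Π(G))` evaluated at
`P = {P_x : x ∈ X}` equals `rk M[X, V\X] + rk M[V\X, X] + 1`. -/
theorem matroid_connectivity_eq_bicutrank {F V : Type*} [Field F] [Fintype V] [DecidableEq V]
    (M : Matrix V V F) (hdiag : ∀ z : V, M z z = 0) :
    ∀ X : Finset V,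
      (mtrRank M (X.disjSum X) : ℤ) + mtrRank M (Xᶜ.disjSum Xᶜ)
          - mtrRank M (Finset.univ : Finset (V ⊕ V)) + 1
        = rkSub M X Xᶜ + rkSub M Xᶜ X + 1 := by
  intro X
  have h1 := mtrRank_disjSum M X
  have h2 := mtrRank_disjSum M Xᶜ
  rw [compl_compl] at h2
  rw [h1, h2, mtrRank_univ]
  have hc : X.card + Xᶜ.card = Fintype.card V := Finset.card_add_card_compl X
  push_cast
  have hc' : (X.card : ℤ) + Xᶜ.card = Fintype.card V := by exact_mod_cast hc
  ring_nf
  omega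
end
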